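/- Let G₁ = ⟨G, t | tht⁻¹ = α(h), h ∈ H⟩ be an HNN extension of a group G over an isomorphism α: H → K of subgroups of G. Suppose K is quasi-malnormal in G₁ and |gHg⁻¹ ∩ K| ≤ 2 for every g ∈ G. If x ∈ G is not contained in any G₁-conjugate of H or of K, then every g ∈ G₁ with gxg⁻¹ ∈ G lies in G. -/

import Mathlib

/-- A set has at most two elements. -/
def AtMostTwo {α : Type*} (S : Set α) : Prop :=
  ∀ a ∈ S, ∀ b ∈ S, ∀ c ∈ S, a = b ∨ a = c ∨ b = c

/-- The intersection `gKg⁻¹ ∩ K` as a set. -/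
def ConjInter {G : Type*} [Group G] (g : G) (K : Subgroup G) : Set G :=
  {x : G | x ∈ K ∧ g⁻¹ * x * g ∈ K}

/-- A subgroup `K` of `G` is quasi-malnormal if `|gKg⁻¹ ∩ K| ≤ 2` for all `g ∉ K`. -/
def Subgroup.IsQuasiMalnormal {G : Type*} [Group G] (K : Subgroup G) : Prop :=
  ∀ g : G, g ∉ K → AtMostTwo (ConjInter g K)

open HNNExtension

section Aux

variable {G : Type*} [Group G] {A B : Subgroup G} {φ : A ≃* B}

/-- Product of a list of letters in the HNN extension. -/
def plist (φ : A ≃* B) (l : List (ℤˣ × G)) : HNNExtension G A B φ :=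
  (l.map (fun p => (t ^ (p.1 : ℤ) * of p.2 : HNNExtension G A B φ))).prod

@[simp] lemma plist_nil : plist φ ([] : List (ℤˣ × G)) = 1 := rfl

@[simp] lemma plist_cons (p : ℤˣ × G) (l : List (ℤˣ × G)) :
    plist φ (p :: l) = (t ^ (p.1 : ℤ) * of p.2) * plist φ l := by
  simp [plist]

@[simp] lemma plist_append (l₁ l₂ : List (ℤˣ × G)) :
    plist φ (l₁ ++ l₂) = plist φ l₁ * plist φ l₂ := by
  simp [plist]

/-- Inverse word: `invL h l` is the (head, list) of the inverse of the word `(h, l)`. -/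
def invL : G → List (ℤˣ × G) → G × List (ℤˣ × G)
  | h, [] => (h⁻¹, [])
  | h, (u, g) :: l => ((invL g l).1, (invL g l).2 ++ [(-u, h⁻¹)])

lemma invL_prod (φ : A ≃* B) (l : List (ℤˣ × G)) (h : G) :
    of (invL h l).1 * plist φ (invL h l).2 = (of h * plist φ l)⁻¹ := by
  induction l generalizing h with
  | nil => simp [invL]
  | cons p l ih =>
    obtain ⟨u, g⟩ := p
    simp only [invL, plist_append, plist_cons, plist_nil, mul_one, ← mul_assoc, ih g]
    simp [mul_assoc, ← zpow_neg]

lemma invL_concat (h : G) (l : List (ℤˣ × G)) (u : ℤˣ) (m : G) :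
    invL h (l ++ [(u, m)]) = (m⁻¹, (-u, (invL h l).1) :: (invL h l).2) := by
  induction l generalizing h with
  | nil => simp [invL]
  | cons p l ih =>
    obtain ⟨u', g⟩ := p
    simp [invL, ih g]

/-- The chain condition used in `ReducedWord`. -/
abbrev CC (A B : Subgroup G) : (ℤˣ × G) → (ℤˣ × G) → Prop :=
  fun a b => a.2 ∈ toSubgroup A B a.1 → a.1 = b.1

lemma units_eq_or_eq_neg (a b : ℤˣ) : a = b ∨ a = -b := by
  rcases Int.units_eq_one_or a with rfl | rfl <;>
    rcases Int.units_eq_one_or b with rfl | rfl <;> simp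

lemma invL_getLast? (h g : G) (u : ℤˣ) (l : List (ℤˣ × G)) :
    (invL h ((u, g) :: l)).2.getLast? = some (-u, h⁻¹) := by
  simp [invL]

lemma invL_chain (h : G) (l : List (ℤˣ × G)) (hc : l.Chain' (CC A B)) :
    (invL h l).2.Chain' (CC A B) := by
  induction l generalizing h with
  | nil => simp [invL, List.Chain']
  | cons p l ih =>
    obtain ⟨u, g⟩ := p
    have hc' : l.Chain' (CC A B) := (List.isChain_cons.1 hc).2
    rw [invL, List.Chain', List.isChain_append]
    refine ⟨ih g hc', List.isChain_singleton _, ?_⟩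
    intro a ha b hb
    simp only [List.head?_cons, Option.mem_def, Option.some.injEq] at hb
    subst hb
    rcases l with _ | ⟨⟨u₂, g₂⟩, l₂⟩
    · simp [invL] at ha
    · rw [invL_getLast? g g₂ u₂ l₂] at ha
      simp only [Option.mem_def, Option.some.injEq] at ha
      subst ha
      intro hmem
      rcases units_eq_or_eq_neg u u₂ with h' | h'
      · rw [h']
      · exfalso
        have hg : g ∈ toSubgroup A B u := by
          rw [h']
          simpa using hmem
        have heq : u = u₂ := (List.isChain_cons_cons.1 hc).1 hg
        rw [heq] at h'
        rcases Int.units_eq_one_or u₂ with rfl | rfl <;> simp at h'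

end Aux

open HNNExtension in

/-- Let `G₁ = ⟨G, t | t a t⁻¹ = φ(a), a ∈ A⟩` be an HNN extension over `φ : A ≃* B`, with
`B` quasi-malnormal in `G₁` and `|gAg⁻¹ ∩ B| ≤ 2` for every `g ∈ G`. If `x ∈ G` lies in
no `G₁`-conjugate of `A` nor of `B`, then every `g ∈ G₁` with `g x g⁻¹ ∈ G` lies in `G`. -/
theorem hnn_conjugator_in_base {G : Type*} [Group G] (A B : Subgroup G) (φ : A ≃* B)
    (hquasi : (B.map (HNNExtension.of : G →* HNNExtension G A B φ)).IsQuasiMalnormal)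
    (hinter : ∀ g : G, AtMostTwo {x : G | x ∈ B ∧ g⁻¹ * x * g ∈ A})
    (x : G)
    (hx : ∀ g₁ : HNNExtension G A B φ,
      g₁ * HNNExtension.of x * g₁⁻¹ ∉ A.map (HNNExtension.of : G →* HNNExtension G A B φ) ∧
      g₁ * HNNExtension.of x * g₁⁻¹ ∉ B.map (HNNExtension.of : G →* HNNExtension G A B φ)) :
    ∀ g : HNNExtension G A B φ,
      g * HNNExtension.of x * g⁻¹ ∈ (HNNExtension.of : G →* HNNExtension G A B φ).range →
      g ∈ (HNNExtension.of : G →* HNNExtension G A B φ).range := by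
  intro g hg
  classical
  rcases HNNExtension.NormalWord.TransversalPair.nonempty G A B with ⟨d⟩
  set w := HNNExtension.NormalWord.equiv φ d g with hw_def
  have hwg : w.prod φ = g := (HNNExtension.NormalWord.equiv φ d).symm_apply_apply g
  rcases List.eq_nil_or_concat w.toList with hnil | ⟨l', ⟨u, gn⟩, hl⟩
  · refine ⟨w.head, ?_⟩
    rw [← hwg]
    simp [HNNExtension.NormalWord.ReducedWord.prod, hnil]
  · exfalso
    set m := gn * x * gn⁻¹ with hm_def
    have hofm : (of m : HNNExtension G A B φ) = of gn * of x * (of gn)⁻¹ := by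
      simp [hm_def, map_mul]
    have hm : m ∉ toSubgroup A B u := by
      intro hmem
      rcases Int.units_eq_one_or u with rfl | rfl
      · exact (hx (of gn)).1 ⟨m, hmem, by rw [hofm]⟩
      · exact (hx (of gn)).2 ⟨m, hmem, by rw [hofm]⟩
    have hchainw : w.toList.Chain' (CC A B) := w.chain
    rw [hl, List.concat_eq_append] at hchainw
    have hchain2 : (l' ++ [(u, m)]).Chain' (CC A B) := by
      rw [List.Chain', List.isChain_append] at hchainw ⊢
      refine ⟨hchainw.1, List.isChain_singleton _, ?_⟩
      intro a ha b hb
      simp only [List.head?_cons, Option.mem_def, Option.some.injEq] at hb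
      subst hb
      exact hchainw.2.2 a ha (u, gn) (by simp)
    have hconcat := invL_concat w.head l' u m
    -- the conjugated reduced word
    let L : HNNExtension.NormalWord.ReducedWord G A B :=
      { head := w.head
        toList := (l' ++ [(u, m)]) ++ (invL w.head (l' ++ [(u, m)])).2
        chain := by
          rw [List.isChain_append]
          refine ⟨hchain2, invL_chain w.head _ hchain2, ?_⟩
          intro a ha b hb
          rw [List.getLast?_concat] at ha
          rw [hconcat] at hb
          simp only [Option.mem_def, Option.some.injEq, List.head?_cons] at ha hb
          subst ha; subst hb
          exact fun hmem => absurd hmem hm }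
    have hg' : g = (of w.head * plist φ l' * t ^ (u : ℤ)) * of gn := by
      rw [← hwg]
      show of w.head * plist φ w.toList = _
      rw [hl]
      simp [mul_assoc]
    have hP : of w.head * plist φ (l' ++ [(u, m)])
        = (of w.head * plist φ l' * t ^ (u : ℤ)) * of m := by
      simp [mul_assoc]
    have hinv : plist φ (invL w.head (l' ++ [(u, m)])).2
        = of m * (of w.head * plist φ (l' ++ [(u, m)]))⁻¹ := by
      have h1 := invL_prod φ (l' ++ [(u, m)]) w.head
      rw [hconcat] at h1
      simp only [map_inv] at h1
      rw [hconcat]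
      dsimp only
      rw [← h1]
      group
    have hLprod : L.prod φ = g * of x * g⁻¹ := by
      show of w.head * plist φ ((l' ++ [(u, m)]) ++ (invL w.head (l' ++ [(u, m)])).2)
        = g * of x * g⁻¹
      rw [plist_append, ← mul_assoc, hinv, hP, hg', hofm]
      group
    have hLnil : L.toList = [] :=
      HNNExtension.ReducedWord.toList_eq_nil_of_mem_of_range φ L (by rw [hLprod]; exact hg)
    simp [L] at hLnil
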